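/- Proposition E.1 (cyclic constancy* and representation with group-specific shocks): Suppose there is an agent i* ∈ 𝒜 such that {i*, j} ∈ 𝒩 for every j ∈ 𝒜∖{i*}. Then the dataset {p^N}_{N∈𝒩} satisfies cyclic constancy* (for every cycle (i_k, j_k, N_k)_{k=1}^K, Σ_{k=1}^K (1+|N_k|)(p_{i_k}^{N_k} − p_{j_k}^{N_k}) = 0) if and only if there exist vectors v_i ∈ ℝ^X for each i ∈ 𝒜 with Σ_{x∈X} v_i(x) = 1 (not required to be nonnegative) and, for each N ∈ 𝒩, a vector O^N ∈ ℝ^X with Σ_{x∈X} O^N(x) = 0, such that for every N ∈ 𝒩 and every i ∈ N, p_i^N = (1/|N|)·v_i + (1/|N|)·Σ_{j∈N∖{i}} p_j^N + O^N. -/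

import Mathlib

open Finset
open scoped Classical

noncomputable section

/-- The simplex Δ(X) of probability vectors on a finite set X. -/
def simplex (X : Type*) [Fintype X] : Set (X → ℝ) :=
  {v | (∀ x, 0 ≤ v x) ∧ (∑ x, v x) = 1}

/-- Cyclic constancy*: size-weighted peer effects sum to zero around every cycle of
influence. -/
def CyclicallyConstantStar {X A : Type*} [Fintype X]
    (𝒩 : Finset (Finset A)) (p : Finset A → A → X → ℝ) : Prop :=
  ∀ (K : ℕ) (ii jj : Fin (K + 1) → A) (Ns : Fin (K + 1) → Finset A),
    (∀ k, Ns k ∈ 𝒩) → (∀ k, ii k ∈ Ns k) → (∀ k, jj k ∈ Ns k) →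
    (∀ k, jj k = ii (k + 1)) →
    (∑ k, ((1 : ℝ) + (Ns k).card) • (p (Ns k) (ii k) - p (Ns k) (jj k))) = 0

/-- Proposition E.1: under the richness condition that some agent i* forms a binary
group with every other agent, cyclic constancy* is equivalent to a uniform
linear-in-means representation with group-specific shocks. -/
theorem cyclic_constancy_star_iff_shock_representation
    {X A : Type*} [Fintype X] [Fintype A] [DecidableEq A]
    (hX : 2 ≤ Fintype.card X) (hA : 2 ≤ Fintype.card A)
    (𝒩 : Finset (Finset A)) (h𝒩 : 𝒩.Nonempty) (h𝒩' : ∀ N ∈ 𝒩, N.Nonempty)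
    (p : Finset A → A → X → ℝ) (hp : ∀ N ∈ 𝒩, ∀ i ∈ N, p N i ∈ simplex X)
    (istar : A) (hrich : ∀ j : A, j ≠ istar → ({istar, j} : Finset A) ∈ 𝒩) :
    CyclicallyConstantStar 𝒩 p ↔
      ∃ (v : A → X → ℝ) (O : Finset A → X → ℝ),
        (∀ i : A, (∑ x, v i x) = 1) ∧
        (∀ N ∈ 𝒩, (∑ x, O N x) = 0) ∧
        ∀ N ∈ 𝒩, ∀ i ∈ N,
          p N i = ((N.card : ℝ))⁻¹ • v i +
            ((N.card : ℝ))⁻¹ • (∑ j ∈ N.erase i, p N j) + O N := by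
  classical
  have hXpos : (0:ℝ) < (Fintype.card X : ℝ) := by
    exact_mod_cast lt_of_lt_of_le (by norm_num) hX
  constructor
  · intro hcc
    -- define the "type" function φ
    set φ : A → X → ℝ := fun j =>
      if j = istar then 0 else (3:ℝ) • (p {istar, j} j - p {istar, j} istar) with hφ
    have hφsum : ∀ j, ∑ x, φ j x = 0 := by
      intro j
      by_cases hj : j = istar
      · simp [hφ, hj]
      · have h1 := (hp _ (hrich j hj) j (by simp)).2
        have h2 := (hp _ (hrich j hj) istar (by simp)).2
        simp only [hφ, if_neg hj, Pi.smul_apply, Pi.sub_apply, smul_eq_mul]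
        rw [← Finset.mul_sum, Finset.sum_sub_distrib, h1, h2]
        ring
    have hcard2 : ∀ j : A, j ≠ istar → ({istar, j} : Finset A).card = 2 := by
      intro j hj
      exact Finset.card_pair (Ne.symm hj)
    -- key consequence of cyclic constancy*
    have hkey : ∀ N ∈ 𝒩, ∀ i ∈ N, ∀ j ∈ N,
        ((1:ℝ) + N.card) • (p N i - p N j) = φ i - φ j := by
      intro N hN i hi j hj
      by_cases hij : i = j
      · simp [hij]
      by_cases hist : i = istar
      · have hjst : j ≠ istar := fun h => hij (by rw [hist, h])
        rw [hist]
        have hi' : istar ∈ N := hist ▸ hi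
        have h := hcc 1 ![istar, j] ![j, istar] ![N, {istar, j}]
          (by intro k; fin_cases k <;> simp [hN, hrich j hjst])
          (by intro k; fin_cases k <;> simp [hi'])
          (by intro k; fin_cases k <;> simp [hj])
          (by intro k; fin_cases k <;> rfl)
        rw [Fin.sum_univ_two] at h
        simp only [Matrix.cons_val_zero, Matrix.cons_val_one, Matrix.head_cons,
          hcard2 j hjst] at h
        funext x
        have hx := congrFun h x
        simp only [Pi.add_apply, Pi.smul_apply, Pi.sub_apply, Pi.zero_apply,
          smul_eq_mul] at hx
        simp only [hφ, if_pos rfl, if_neg hjst, Pi.sub_apply, Pi.smul_apply,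
          Pi.zero_apply, smul_eq_mul]
        push_cast at hx ⊢
        linarith
      by_cases hjst : j = istar
      · rw [hjst]
        have hj' : istar ∈ N := hjst ▸ hj
        have h := hcc 1 ![i, istar] ![istar, i] ![N, {istar, i}]
          (by intro k; fin_cases k <;> simp [hN, hrich i hist])
          (by intro k; fin_cases k <;> simp [hi])
          (by intro k; fin_cases k <;> simp [hj'])
          (by intro k; fin_cases k <;> rfl)
        rw [Fin.sum_univ_two] at h
        simp only [Matrix.cons_val_zero, Matrix.cons_val_one, Matrix.head_cons,
          hcard2 i hist] at h
        funext x
        have hx := congrFun h x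
        simp only [Pi.add_apply, Pi.smul_apply, Pi.sub_apply, Pi.zero_apply,
          smul_eq_mul] at hx
        simp only [hφ, if_pos rfl, if_neg hist, Pi.sub_apply, Pi.smul_apply,
          Pi.zero_apply, smul_eq_mul]
        push_cast at hx ⊢
        linarith
      · have h := hcc 2 ![i, j, istar] ![j, istar, i] ![N, {istar, j}, {istar, i}]
          (by intro k; fin_cases k <;> simp [hN, hrich j hjst, hrich i hist])
          (by intro k; fin_cases k <;> simp [hi, hj])
          (by intro k; fin_cases k <;> simp [hi, hj])
          (by intro k; fin_cases k <;> rfl)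
        rw [Fin.sum_univ_three] at h
        simp only [Matrix.cons_val_zero, Matrix.cons_val_one, Matrix.head_cons,
          Matrix.cons_val_two, Matrix.tail_cons, hcard2 j hjst, hcard2 i hist] at h
        funext x
        have hx := congrFun h x
        simp only [Pi.add_apply, Pi.smul_apply, Pi.sub_apply, Pi.zero_apply,
          smul_eq_mul] at hx
        simp only [hφ, if_neg hist, if_neg hjst, Pi.sub_apply, Pi.smul_apply,
          smul_eq_mul]
        push_cast at hx ⊢
        linarith
    -- build v and O
    set u : X → ℝ := fun _ => (Fintype.card X : ℝ)⁻¹ with hu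
    have husum : ∑ x, u x = 1 := by
      simp [hu, Finset.sum_const, Finset.card_univ]
      field_simp
    refine ⟨fun i => φ i + u,
      fun N => if hN : N ∈ 𝒩 then
        ((N.card : ℝ))⁻¹ • (((1:ℝ) + N.card) • p N ((h𝒩' N hN).choose)
          - φ ((h𝒩' N hN).choose) - u - ∑ j ∈ N, p N j) else 0, ?_, ?_, ?_⟩
    · intro i
      simp [Finset.sum_add_distrib, hφsum i, husum]
    · intro N hN
      have hi0 : (h𝒩' N hN).choose ∈ N := (h𝒩' N hN).choose_spec
      have hSsum : ∑ x, (∑ j ∈ N, p N j) x = (N.card : ℝ) := by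
        simp only [Finset.sum_apply]
        rw [Finset.sum_comm]
        rw [Finset.sum_congr rfl (fun j hj => (hp N hN j hj).2)]
        simp
      have hpsum := (hp N hN _ hi0).2
      simp only [dif_pos hN, Pi.smul_apply, Pi.sub_apply, smul_eq_mul]
      rw [← Finset.mul_sum]
      have : ∑ x, (((1:ℝ) + N.card) * p N ((h𝒩' N hN).choose) x
          - φ ((h𝒩' N hN).choose) x - u x - (∑ j ∈ N, p N j) x) = 0 := by
        rw [Finset.sum_sub_distrib, Finset.sum_sub_distrib, Finset.sum_sub_distrib,
          ← Finset.mul_sum, hpsum, hφsum, husum, hSsum]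
        ring
      rw [this, mul_zero]
    · intro N hN i hi
      have hi0 : (h𝒩' N hN).choose ∈ N := (h𝒩' N hN).choose_spec
      have hn : (0:ℝ) < (N.card : ℝ) := by
        exact_mod_cast Finset.card_pos.mpr (h𝒩' N hN)
      have hk := hkey N hN i hi _ hi0
      have herase : ∑ j ∈ N.erase i, p N j = (∑ j ∈ N, p N j) - p N i := by
        rw [← Finset.add_sum_erase N (p N) hi]
        abel
      funext x
      have hkx := congrFun hk x
      simp only [Pi.smul_apply, Pi.sub_apply, smul_eq_mul] at hkx
      simp only [dif_pos hN, herase, Pi.add_apply, Pi.smul_apply, Pi.sub_apply,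
        smul_eq_mul]
      field_simp
      ring_nf
      ring_nf at hkx
      nlinarith [hkx, hn]
  · rintro ⟨v, O, hvsum, hOsum, hrep⟩
    intro K ii jj Ns hNs hii hjj hcyc
    have hd : ∀ k, ((1:ℝ) + (Ns k).card) • (p (Ns k) (ii k) - p (Ns k) (jj k))
        = v (ii k) - v (jj k) := by
      intro k
      have hn : (0:ℝ) < ((Ns k).card : ℝ) := by
        exact_mod_cast Finset.card_pos.mpr ⟨ii k, hii k⟩
      have h1 := hrep (Ns k) (hNs k) (ii k) (hii k)
      have h2 := hrep (Ns k) (hNs k) (jj k) (hjj k)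
      have he1 : ∑ j ∈ (Ns k).erase (ii k), p (Ns k) j
          = (∑ j ∈ Ns k, p (Ns k) j) - p (Ns k) (ii k) := by
        rw [← Finset.add_sum_erase (Ns k) (p (Ns k)) (hii k)]; abel
      have he2 : ∑ j ∈ (Ns k).erase (jj k), p (Ns k) j
          = (∑ j ∈ Ns k, p (Ns k) j) - p (Ns k) (jj k) := by
        rw [← Finset.add_sum_erase (Ns k) (p (Ns k)) (hjj k)]; abel
      rw [he1] at h1; rw [he2] at h2
      funext x
      have h1x := congrFun h1 x
      have h2x := congrFun h2 x
      simp only [Pi.add_apply, Pi.smul_apply, Pi.sub_apply, smul_eq_mul] at h1x h2x ⊢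
      have hne : ((Ns k).card : ℝ) ≠ 0 := ne_of_gt hn
      field_simp at h1x h2x
      nlinarith [h1x, h2x]
    calc (∑ k, ((1:ℝ) + (Ns k).card) • (p (Ns k) (ii k) - p (Ns k) (jj k)))
        = ∑ k, (v (ii k) - v (jj k)) := Finset.sum_congr rfl (fun k _ => hd k)
      _ = (∑ k, v (ii k)) - ∑ k, v (jj k) := Finset.sum_sub_distrib _ _
      _ = 0 := by
          have h1 : (∑ k, v (jj k)) = ∑ k, v (ii (k+1)) :=
            Finset.sum_congr rfl (fun k _ => by rw [hcyc k])
          have h2 : (∑ k, v (ii (k+1))) = ∑ k, v (ii k) :=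
            Fintype.sum_equiv (Equiv.addRight (1 : Fin (K+1)))
              (fun k => v (ii (k+1))) (fun k => v (ii k)) (fun k => rfl)
          rw [h1, h2, sub_self]
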